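/- Fix integers K ≥ 1 and N ≥ 1. For k,l ∈ {1,…,K} and n ∈ {1,…,N} let channel power gains g_{kln} > 0, noise powers σ_{kn}² > 0, rate weights w_k > 0, and an SINR gap Γ ≥ 1 be given, and set M = max_{k,l,n} ( w_l·g_{lkn}/σ_{ln}² ). Then for all P, P' ∈ ℝ^{K×N} with nonnegative entries, |g(P') − g(P)| ≤ K·M·Σ_{k=1}^K Σ_{n=1}^N |P'_{kn} − P_{kn}|; that is, g is Lipschitz on the nonnegative orthant with constant K·M with respect to the entrywise ℓ¹ norm. -/

import Mathlib

lemma log_sub_le {s a b : ℝ} (hs : 0 < s) (ha : s ≤ a) (hb : s ≤ b) :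
    |Real.log a - Real.log b| ≤ |a - b| / s := by
  wlog h : b ≤ a generalizing a b
  · rw [abs_sub_comm, abs_sub_comm a b]; exact this hb ha (le_of_not_ge h)
  have hb0 : 0 < b := hs.trans_le hb
  have ha0 : 0 < a := hs.trans_le ha
  rw [abs_of_nonneg (sub_nonneg.2 (Real.log_le_log hb0 h)),
      abs_of_nonneg (sub_nonneg.2 h)]
  have e : Real.log a - Real.log b = Real.log (a / b) := (Real.log_div (by positivity) (by positivity)).symm
  rw [e]
  calc Real.log (a / b) ≤ a / b - 1 := Real.log_le_sub_one_of_pos (by positivity)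
    _ = (a - b) / b := by field_simp
    _ ≤ (a - b) / s := by gcongr; try linarith

lemma psi_diff {c A A' : ℝ} (hc : 0 ≤ c) (hA : 0 < A) (hA' : 0 < A') :
    |(Real.log (A' + c) - Real.log A') - (Real.log (A + c) - Real.log A)| ≤
      |Real.log A' - Real.log A| := by
  wlog h : A ≤ A' generalizing A A'
  · rw [abs_sub_comm, abs_sub_comm (Real.log A')]; exact this hA' hA (le_of_not_ge h)
  have h1 : Real.log (A' + c) - Real.log (A + c) ≤ Real.log A' - Real.log A := by
    rw [← Real.log_div (by positivity) (by positivity),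
        ← Real.log_div (by positivity) (by positivity)]
    apply Real.log_le_log (by positivity)
    rw [div_le_div_iff₀ (by positivity) (by positivity)]
    nlinarith
  have h2 : Real.log (A + c) ≤ Real.log (A' + c) := Real.log_le_log (by positivity) (by linarith)
  have h3 : Real.log A ≤ Real.log A' := Real.log_le_log hA h
  calc |(Real.log (A' + c) - Real.log A') - (Real.log (A + c) - Real.log A)|
      ≤ Real.log A' - Real.log A := abs_le.2 ⟨by linarith, by linarith⟩
    _ ≤ |Real.log A' - Real.log A| := le_abs_self _

lemma key {Γ s c c' I I' : ℝ} (hΓ : 1 ≤ Γ) (hs : 0 < s) (hc : 0 ≤ c) (hc' : 0 ≤ c')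
    (hI : s ≤ I) (hI' : s ≤ I') :
    |Real.log (1 + c' / (Γ * I')) - Real.log (1 + c / (Γ * I))| ≤
      (|c' - c| + |I' - I|) / s := by
  have hΓ0 : 0 < Γ := lt_of_lt_of_le one_pos hΓ
  have hI0 : 0 < I := hs.trans_le hI
  have hI0' : 0 < I' := hs.trans_le hI'
  have hA : s ≤ Γ * I := le_trans hI (by nlinarith)
  have hA' : s ≤ Γ * I' := le_trans hI' (by nlinarith)
  have hA0 : 0 < Γ * I := hs.trans_le hA
  have hA0' : 0 < Γ * I' := hs.trans_le hA'
  have e : ∀ d J : ℝ, 0 ≤ d → s ≤ J →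
      Real.log (1 + d / J) = Real.log (J + d) - Real.log J := by
    intro d J hd hJ
    have hJ0 : 0 < J := hs.trans_le hJ
    rw [← Real.log_div (by positivity) (by positivity)]
    congr 1; field_simp
  rw [e c' (Γ * I') hc' hA', e c (Γ * I) hc hA]
  have split : (Real.log (Γ * I' + c') - Real.log (Γ * I')) -
      (Real.log (Γ * I + c) - Real.log (Γ * I)) =
      (Real.log (Γ * I' + c') - Real.log (Γ * I' + c)) +
      ((Real.log (Γ * I' + c) - Real.log (Γ * I')) -
       (Real.log (Γ * I + c) - Real.log (Γ * I))) := by ring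
  rw [split]
  have b1 : |Real.log (Γ * I' + c') - Real.log (Γ * I' + c)| ≤ |c' - c| / s := by
    have := log_sub_le hs (by linarith : s ≤ Γ * I' + c') (by linarith : s ≤ Γ * I' + c)
    simpa using this
  have b2 : |(Real.log (Γ * I' + c) - Real.log (Γ * I')) -
      (Real.log (Γ * I + c) - Real.log (Γ * I))| ≤ |I' - I| / s := by
    refine le_trans (psi_diff hc hA0 hA0') ?_
    have e1 : Real.log (Γ * I') - Real.log (Γ * I) = Real.log I' - Real.log I := by
      rw [Real.log_mul (ne_of_gt hΓ0) (ne_of_gt hI0'), Real.log_mul (ne_of_gt hΓ0) (ne_of_gt hI0)]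
      ring
    rw [e1]
    exact log_sub_le hs hI' hI
  calc _ ≤ |Real.log (Γ * I' + c') - Real.log (Γ * I' + c)| +
        |(Real.log (Γ * I' + c) - Real.log (Γ * I')) -
         (Real.log (Γ * I + c) - Real.log (Γ * I))| := abs_add_le _ _
    _ ≤ |c' - c| / s + |I' - I| / s := add_le_add b1 b2
    _ = (|c' - c| + |I' - I|) / s := by ring

/-- Interference-plus-noise power `I_{kn}(P) = σ_{kn}² + Σ_{l≠k} g_{kln} P_{ln}`. -/
noncomputable def interf (K N : ℕ) (g : Fin K → Fin K → Fin N → ℝ)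
    (σ2 : Fin K → Fin N → ℝ) (P : Fin K → Fin N → ℝ) (k : Fin K) (n : Fin N) : ℝ :=
  σ2 k n + ∑ l ∈ Finset.univ.erase k, g k l n * P l n

/-- SINR `SINR_{kn}(P) = g_{kkn} P_{kn} / I_{kn}(P)`. -/
noncomputable def sinr (K N : ℕ) (g : Fin K → Fin K → Fin N → ℝ)
    (σ2 : Fin K → Fin N → ℝ) (P : Fin K → Fin N → ℝ) (k : Fin K) (n : Fin N) : ℝ :=
  g k k n * P k n / interf K N g σ2 P k n

/-- Weighted sum rate `g(P) = Σ_k Σ_n w_k log(1 + SINR_{kn}(P)/Γ)`. -/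
noncomputable def wsr (K N : ℕ) (g : Fin K → Fin K → Fin N → ℝ)
    (σ2 : Fin K → Fin N → ℝ) (w : Fin K → ℝ) (Γ : ℝ)
    (P : Fin K → Fin N → ℝ) : ℝ :=
  ∑ k, ∑ n, w k * Real.log (1 + sinr K N g σ2 P k n / Γ)

theorem wsr_lipschitz (K N : ℕ) (hK : 1 ≤ K) (hN : 1 ≤ N)
    (g : Fin K → Fin K → Fin N → ℝ) (hg : ∀ k l n, 0 < g k l n)
    (σ2 : Fin K → Fin N → ℝ) (hσ : ∀ k n, 0 < σ2 k n)
    (w : Fin K → ℝ) (hw : ∀ k, 0 < w k) (Γ : ℝ) (hΓ : 1 ≤ Γ)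
    (M : ℝ)
    (hM : IsGreatest {x : ℝ | ∃ k l : Fin K, ∃ n : Fin N, x = w l * g l k n / σ2 l n} M) :
    ∀ P P' : Fin K → Fin N → ℝ, (∀ k n, 0 ≤ P k n) → (∀ k n, 0 ≤ P' k n) →
      |wsr K N g σ2 w Γ P' - wsr K N g σ2 w Γ P| ≤
        K * M * ∑ k, ∑ n, |P' k n - P k n| := by
  intro P P' hP hP'
  have interf_ge : ∀ (Q : Fin K → Fin N → ℝ), (∀ k n, 0 ≤ Q k n) →
      ∀ k n, σ2 k n ≤ interf K N g σ2 Q k n := by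
    intro Q hQ k n
    have h0 : 0 ≤ ∑ l ∈ Finset.univ.erase k, g k l n * Q l n :=
      Finset.sum_nonneg fun l _ => mul_nonneg (hg k l n).le (hQ l n)
    unfold interf; linarith
  have term_bound : ∀ k n,
      w k * |Real.log (1 + sinr K N g σ2 P' k n / Γ) - Real.log (1 + sinr K N g σ2 P k n / Γ)| ≤
        M * ∑ l, |P' l n - P l n| := by
    intro k n
    have hs := hσ k n
    have hkey := key (Γ := Γ) (s := σ2 k n) (c := g k k n * P k n) (c' := g k k n * P' k n)
      (I := interf K N g σ2 P k n) (I' := interf K N g σ2 P' k n)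
      hΓ hs (mul_nonneg (hg k k n).le (hP k n)) (mul_nonneg (hg k k n).le (hP' k n))
      (interf_ge P hP k n) (interf_ge P' hP' k n)
    have esinr : ∀ Q, sinr K N g σ2 Q k n / Γ = g k k n * Q k n / (Γ * interf K N g σ2 Q k n) := by
      intro Q; unfold sinr; rw [div_div, mul_comm (interf K N g σ2 Q k n) Γ]
    rw [esinr P', esinr P] at *
    have hc : |g k k n * P' k n - g k k n * P k n| = g k k n * |P' k n - P k n| := by
      rw [← mul_sub, abs_mul, abs_of_pos (hg k k n)]
    have hIdiff : |interf K N g σ2 P' k n - interf K N g σ2 P k n| ≤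
        ∑ l ∈ Finset.univ.erase k, g k l n * |P' l n - P l n| := by
      unfold interf
      have e2 : (σ2 k n + ∑ l ∈ Finset.univ.erase k, g k l n * P' l n) -
          (σ2 k n + ∑ l ∈ Finset.univ.erase k, g k l n * P l n) =
          ∑ l ∈ Finset.univ.erase k, g k l n * (P' l n - P l n) := by
        simp only [mul_sub, Finset.sum_sub_distrib]
        ring
      rw [e2]
      refine le_trans (Finset.abs_sum_le_sum_abs _ _) ?_
      refine Finset.sum_le_sum fun l _ => ?_
      rw [abs_mul, abs_of_pos (hg k l n)]
    have step1 : w k * |Real.log (1 + g k k n * P' k n / (Γ * interf K N g σ2 P' k n)) -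
        Real.log (1 + g k k n * P k n / (Γ * interf K N g σ2 P k n))| ≤
        w k * ((g k k n * |P' k n - P k n| +
          ∑ l ∈ Finset.univ.erase k, g k l n * |P' l n - P l n|) / σ2 k n) := by
      refine mul_le_mul_of_nonneg_left ?_ (hw k).le
      refine le_trans hkey ?_
      rw [hc]
      gcongr
    refine le_trans step1 ?_
    have esum : g k k n * |P' k n - P k n| +
        ∑ l ∈ Finset.univ.erase k, g k l n * |P' l n - P l n| =
        ∑ l, g k l n * |P' l n - P l n| :=
      Finset.add_sum_erase _ (fun l => g k l n * |P' l n - P l n|) (Finset.mem_univ k)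
    rw [esum]
    have lhs_eq : w k * ((∑ l, g k l n * |P' l n - P l n|) / σ2 k n) =
        ∑ l, (w k * g k l n / σ2 k n) * |P' l n - P l n| := by
      rw [Finset.sum_div, Finset.mul_sum]
      exact Finset.sum_congr rfl fun l _ => by ring
    rw [lhs_eq]
    calc ∑ l, (w k * g k l n / σ2 k n) * |P' l n - P l n|
        ≤ ∑ l, M * |P' l n - P l n| :=
          Finset.sum_le_sum fun l _ =>
            mul_le_mul_of_nonneg_right (hM.2 ⟨l, k, n, rfl⟩) (abs_nonneg _)
      _ = M * ∑ l, |P' l n - P l n| := (Finset.mul_sum _ _ _).symm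
  have hdiff : wsr K N g σ2 w Γ P' - wsr K N g σ2 w Γ P =
      ∑ k, ∑ n, w k * (Real.log (1 + sinr K N g σ2 P' k n / Γ) -
        Real.log (1 + sinr K N g σ2 P k n / Γ)) := by
    unfold wsr
    rw [← Finset.sum_sub_distrib]
    exact Finset.sum_congr rfl fun k _ => by
      rw [← Finset.sum_sub_distrib]
      exact Finset.sum_congr rfl fun n _ => by ring
  rw [hdiff]
  calc |∑ k, ∑ n, w k * (Real.log (1 + sinr K N g σ2 P' k n / Γ) -
        Real.log (1 + sinr K N g σ2 P k n / Γ))|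
      ≤ ∑ k, |∑ n, w k * (Real.log (1 + sinr K N g σ2 P' k n / Γ) -
        Real.log (1 + sinr K N g σ2 P k n / Γ))| := Finset.abs_sum_le_sum_abs _ _
    _ ≤ ∑ k, ∑ n, |w k * (Real.log (1 + sinr K N g σ2 P' k n / Γ) -
        Real.log (1 + sinr K N g σ2 P k n / Γ))| :=
        Finset.sum_le_sum fun k _ => Finset.abs_sum_le_sum_abs _ _
    _ ≤ ∑ k : Fin K, ∑ n, M * ∑ l, |P' l n - P l n| :=
        Finset.sum_le_sum fun k _ => Finset.sum_le_sum fun n _ => by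
          rw [abs_mul, abs_of_pos (hw k)]
          exact term_bound k n
    _ = K * M * ∑ k, ∑ n, |P' k n - P k n| := by
        simp only [← Finset.mul_sum]
        rw [Finset.sum_const, Finset.card_univ, Fintype.card_fin, nsmul_eq_mul,
          Finset.sum_comm]
        ring
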